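/- Let G be a finite bipartite graph and let M_1, …, M_k be a partition of B ∪ W into bimodules of G, with quotient graph H. Then D(G) = Dom( ⋃_{C} D(Rroc(C)) ), where the union ranges over all maximal bicliques C of H (identified with their vertex sets). -/
import Mathlib


open Finset

/-- A finite bipartite graph: black vertices `B`, white vertices `W` (disjoint finite sets),
and an edge set `E ⊆ B × W`. -/
structure BipGraph (V : Type) [DecidableEq V] where
  B : Finset V
  W : Finset V
  disj : Disjoint B W
  E : Set (V × V)
  E_sub : ∀ e ∈ E, e.1 ∈ B ∧ e.2 ∈ W

variable {V : Type} [DecidableEq V]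

/-- `(S, T)` is a biclique of `G`. -/
def IsBiclique (G : BipGraph V) (S T : Finset V) : Prop :=
  S ⊆ G.B ∧ T ⊆ G.W ∧ ∀ b ∈ S, ∀ w ∈ T, (b, w) ∈ G.E

/-- `(b, w)` is a bisize of `G`: `G` contains a biclique of size `(b, w)`. -/
def Bisize (G : BipGraph V) (p : ℕ × ℕ) : Prop :=
  ∃ S T, IsBiclique G S T ∧ S.card = p.1 ∧ T.card = p.2

/-- `Dominates p q` : `p` dominates `q`, i.e. `q.1 ≤ p.1` and `q.2 ≤ p.2`. -/
def Dominates (p q : ℕ × ℕ) : Prop := q.1 ≤ p.1 ∧ q.2 ≤ p.2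

/-- A maxbisize of `G` : a bisize not strictly dominated by another bisize. -/
def MaxBisize (G : BipGraph V) (p : ℕ × ℕ) : Prop :=
  Bisize G p ∧ ∀ q, Bisize G q → Dominates q p → q = p

/-- `DD G` is the set of maxbisizes of `G` (denoted `D(G)` in the paper). -/
def DD (G : BipGraph V) : Set (ℕ × ℕ) := {p | MaxBisize G p}

/-- `Dom X` : the elements of `X` not strictly dominated by another element of `X`. -/
def Dom (X : Set (ℕ × ℕ)) : Set (ℕ × ℕ) := {p ∈ X | ∀ q ∈ X, Dominates q p → q = p}

/-- The induced subgraph `G[M]`. -/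
def induce (G : BipGraph V) (M : Finset V) : BipGraph V where
  B := G.B ∩ M
  W := G.W ∩ M
  disj := G.disj.mono inter_subset_left inter_subset_left
  E := {e ∈ G.E | e.1 ∈ M ∧ e.2 ∈ M}
  E_sub := fun e he =>
    ⟨mem_inter.mpr ⟨(G.E_sub e he.1).1, he.2.1⟩, mem_inter.mpr ⟨(G.E_sub e he.1).2, he.2.2⟩⟩

/-- `X` is nonadjacent to `Y` : no vertex of `X` is adjacent to a vertex of `Y`. -/
def Nonadj (G : BipGraph V) (X Y : Finset V) : Prop :=
  ∀ x ∈ X, ∀ y ∈ Y, (x, y) ∉ G.E ∧ (y, x) ∉ G.E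

/-- `X` is fully adjacent to `Y` : every black vertex of `X` is adjacent to every white
vertex of `Y` and every white vertex of `X` is adjacent to every black vertex of `Y`. -/
def FullyAdj (G : BipGraph V) (X Y : Finset V) : Prop :=
  (∀ b ∈ X ∩ G.B, ∀ w ∈ Y ∩ G.W, (b, w) ∈ G.E) ∧
  (∀ b ∈ Y ∩ G.B, ∀ w ∈ X ∩ G.W, (b, w) ∈ G.E)

/-- `X` is left adjacent to `Y` : every black vertex of `X` is adjacent to every white
vertex of `Y` and no white vertex of `X` is adjacent to a black vertex of `Y`. -/
def LeftAdj (G : BipGraph V) (X Y : Finset V) : Prop :=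
  (∀ b ∈ X ∩ G.B, ∀ w ∈ Y ∩ G.W, (b, w) ∈ G.E) ∧
  (∀ b ∈ Y ∩ G.B, ∀ w ∈ X ∩ G.W, (b, w) ∉ G.E)

open Classical in
/-- `X ⊕ Y` with the convention `∅ ⊕ X = X ⊕ ∅ = X`. -/
noncomputable def oplus (X Y : Set (ℕ × ℕ)) : Set (ℕ × ℕ) :=
  if X = ∅ then Y else if Y = ∅ then X
  else {p | ∃ x ∈ X, ∃ y ∈ Y, p = x + y}

/-- `→_w^z X`. -/
def shiftW (z : ℕ) (X : Set (ℕ × ℕ)) : Set (ℕ × ℕ) := {p | ∃ q ∈ X, p = (q.1, q.2 + z)}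

/-- `→_b^z X`. -/
def shiftB (z : ℕ) (X : Set (ℕ × ℕ)) : Set (ℕ × ℕ) := {p | ∃ q ∈ X, p = (q.1 + z, q.2)}

/-- A bimodule of `G`. -/
def Bimodule (G : BipGraph V) (M : Finset V) : Prop :=
  M ⊆ G.B ∪ G.W ∧ ∀ v ∈ (G.B ∪ G.W) \ M, Nonadj G {v} M ∨ FullyAdj G {v} M

/-- The quotient graph of `G` by a family `M` of bimodules: vertex `(i, true)` is the
black vertex `bᵢ` (present when `Mᵢ ∩ B ≠ ∅`), `(i, false)` the white vertex `wᵢ`. -/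
def quotientGraph (G : BipGraph V) {k : ℕ} (M : Fin k → Finset V) :
    BipGraph (Fin k × Bool) where
  B := Finset.univ.filter fun p => p.2 = true ∧ (M p.1 ∩ G.B).Nonempty
  W := Finset.univ.filter fun p => p.2 = false ∧ (M p.1 ∩ G.W).Nonempty
  disj := by
    rw [Finset.disjoint_left]
    intro p hp hq
    simp only [Finset.mem_filter, Finset.mem_univ, true_and] at hp hq
    rw [hp.1] at hq
    exact Bool.noConfusion hq.1
  E := {e | e.1.2 = true ∧ e.2.2 = false ∧
       ∃ x ∈ M e.1.1 ∩ G.B, ∃ y ∈ M e.2.1 ∩ G.W, (x, y) ∈ G.E}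
  E_sub := fun e he => by
    obtain ⟨h1, h2, x, hx, y, hy, _⟩ := he
    constructor <;> simp only [Finset.mem_filter, Finset.mem_univ, true_and]
    · exact ⟨h1, ⟨x, hx⟩⟩
    · exact ⟨h2, ⟨y, hy⟩⟩

/-- `Rroc S` for a set `S` of vertices of the quotient graph. -/
def Rroc (G : BipGraph V) {k : ℕ} (M : Fin k → Finset V)
    (S : Finset (Fin k × Bool)) : Finset V :=
  S.biUnion fun p => if p.2 then M p.1 ∩ G.B else M p.1 ∩ G.W

/-- `Corr S` for a set `S` of vertices of `G`. -/
def Corr (G : BipGraph V) {k : ℕ} (M : Fin k → Finset V) (C : Finset V) :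
    Finset (Fin k × Bool) :=
  Finset.univ.filter fun p =>
    if p.2 then (C ∩ M p.1 ∩ G.B).Nonempty else (C ∩ M p.1 ∩ G.W).Nonempty

/-- `C` is the vertex set of a biclique of `G`. -/
def IsBicliqueVS (G : BipGraph V) (C : Finset V) : Prop :=
  ∃ S T, IsBiclique G S T ∧ S ∪ T = C

/-- `C` is the vertex set of a maximal biclique of `G`. -/
def MaximalBicliqueVS (G : BipGraph V) (C : Finset V) : Prop :=
  IsBicliqueVS G C ∧ ∀ D, IsBicliqueVS G D → C ⊆ D → C = D

/-- `D_C(Mᵢ)`, the maxbisize set of the bimodule `Mᵢ` with respect to a maximal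
biclique `C` of the quotient graph. -/
def DC (G : BipGraph V) {k : ℕ} (M : Fin k → Finset V)
    (C : Finset (Fin k × Bool)) (i : Fin k) : Set (ℕ × ℕ) :=
  if (i, true) ∈ C then
    if (i, false) ∈ C then DD (induce G (M i))
    else {((M i ∩ G.B).card, 0)}
  else
    if (i, false) ∈ C then {(0, (M i ∩ G.W).card)}
    else ∅

/-- `f 0 ⊕ f 1 ⊕ … ⊕ f (k-1)` (with the convention that `∅` is neutral for `⊕`). -/
noncomputable def oplusFold {k : ℕ} (f : Fin k → Set (ℕ × ℕ)) : Set (ℕ × ℕ) :=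
  (List.finRange k).foldr (fun i acc => oplus (f i) acc) ∅

/-- The path on `n` vertices `0, 1, …, n-1`, two-colored alternately; the black
vertices are those whose index has parity `r`. -/
def pathGraph (n r : ℕ) : BipGraph (Fin n) where
  B := Finset.univ.filter fun i => (i : ℕ) % 2 = r
  W := Finset.univ.filter fun i => (i : ℕ) % 2 ≠ r
  disj := by
    rw [Finset.disjoint_left]
    intro i hi hj
    simp only [Finset.mem_filter, Finset.mem_univ, true_and] at hi hj
    exact hj hi
  E := {e | (e.1 : ℕ) % 2 = r ∧ ((e.1 : ℕ) + 1 = (e.2 : ℕ) ∨ (e.2 : ℕ) + 1 = (e.1 : ℕ))}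
  E_sub := fun e he => by
    obtain ⟨h1, h2⟩ := he
    refine ⟨?_, ?_⟩ <;> simp only [Finset.mem_filter, Finset.mem_univ, true_and]
    · exact h1
    · omega

/-- The cycle on `n` vertices `0, 1, …, n-1` (consecutive vertices modulo `n` adjacent),
two-colored alternately; the black vertices are those whose index has parity `r`. -/
def cycleGraph (n r : ℕ) : BipGraph (Fin n) where
  B := Finset.univ.filter fun i => (i : ℕ) % 2 = r
  W := Finset.univ.filter fun i => (i : ℕ) % 2 ≠ r
  disj := by
    rw [Finset.disjoint_left]
    intro i hi hj
    simp only [Finset.mem_filter, Finset.mem_univ, true_and] at hi hj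
    exact hj hi
  E := {e | (e.1 : ℕ) % 2 = r ∧ (e.2 : ℕ) % 2 ≠ r ∧
       (((e.1 : ℕ) + 1) % n = (e.2 : ℕ) ∨ ((e.2 : ℕ) + 1) % n = (e.1 : ℕ))}
  E_sub := fun e he => by
    obtain ⟨h1, h2, _⟩ := he
    refine ⟨?_, ?_⟩ <;> simp only [Finset.mem_filter, Finset.mem_univ, true_and]
    · exact h1
    · exact h2

/-- The bipartite complement of `G`. -/
def bipCompl (G : BipGraph V) : BipGraph V where
  B := G.B
  W := G.W
  disj := G.disj
  E := {e | e.1 ∈ G.B ∧ e.2 ∈ G.W ∧ e ∉ G.E}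
  E_sub := fun _ he => ⟨he.1, he.2.1⟩

/-- `x` and `y` are adjacent in `G`. -/
def Adjv (G : BipGraph V) (x y : V) : Prop := (x, y) ∈ G.E ∨ (y, x) ∈ G.E

/-- `G` is twin-free: no two distinct vertices have the same set of neighbors. -/
def TwinFree (G : BipGraph V) : Prop :=
  ∀ x ∈ G.B ∪ G.W, ∀ y ∈ G.B ∪ G.W,
    ({z | Adjv G x z} = {z | Adjv G y z}) → x = y

/-- The edges of the skew star `Star_{1,2,3}`: a path `0-1-2-3-4-5` plus a vertex `6`
adjacent only to `2`. -/
def starEdges : List (ℕ × ℕ) := [(0, 1), (1, 2), (2, 3), (3, 4), (4, 5), (2, 6)]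

/-- `G` contains no induced `Star_{1,2,3}`. -/
def Star123Free (G : BipGraph V) : Prop :=
  ¬ ∃ v : Fin 7 → V, Function.Injective v ∧ (∀ i, v i ∈ G.B ∪ G.W) ∧
    ∀ i j : Fin 7, Adjv G (v i) (v j) ↔
      (((i : ℕ), (j : ℕ)) ∈ starEdges ∨ ((j : ℕ), (i : ℕ)) ∈ starEdges)

/-- Every vertex of `G` has degree at most 2 (equivalent to `K_{1,3}`-freeness for
bipartite graphs). -/
def MaxDeg2 (G : BipGraph V) : Prop :=
  ∀ x ∈ G.B ∪ G.W, ({y | Adjv G x y}).ncard ≤ 2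
section Aux

variable {V : Type} [DecidableEq V]

lemma bisize_mono (G : BipGraph V) {p q : ℕ × ℕ} (h : Bisize G p)
    (hd : Dominates p q) : Bisize G q := by
  obtain ⟨S, T, ⟨hSB, hTW, hE⟩, hS, hT⟩ := h
  obtain ⟨S', hS'sub, hS'card⟩ := Finset.exists_subset_card_eq (hS ▸ hd.1 : q.1 ≤ S.card)
  obtain ⟨T', hT'sub, hT'card⟩ := Finset.exists_subset_card_eq (hT ▸ hd.2 : q.2 ≤ T.card)
  exact ⟨S', T', ⟨hS'sub.trans hSB, hT'sub.trans hTW,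
    fun b hb w hw => hE b (hS'sub hb) w (hT'sub hw)⟩, hS'card, hT'card⟩

lemma bisize_bound (G : BipGraph V) {p : ℕ × ℕ} (h : Bisize G p) :
    p.1 ≤ G.B.card ∧ p.2 ≤ G.W.card := by
  obtain ⟨S, T, ⟨hSB, hTW, _⟩, hS, hT⟩ := h
  exact ⟨hS ▸ Finset.card_le_card hSB, hT ▸ Finset.card_le_card hTW⟩

lemma exists_maxbisize_dom (G : BipGraph V) {p : ℕ × ℕ} (h : Bisize G p) :
    ∃ q, MaxBisize G q ∧ Dominates q p := by
  classical
  set s : Finset (ℕ × ℕ) :=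
    (Finset.range (G.B.card + 1) ×ˢ Finset.range (G.W.card + 1)).filter
      (fun q => Bisize G q ∧ Dominates q p) with hs
  have hps : p ∈ s := by
    simp only [hs, Finset.mem_filter, Finset.mem_product, Finset.mem_range]
    have := bisize_bound G h
    exact ⟨⟨by omega, by omega⟩, h, le_refl _, le_refl _⟩
  obtain ⟨q, hqs, hqmax⟩ := Finset.exists_max_image s (fun q => q.1 + q.2) ⟨p, hps⟩
  simp only [hs, Finset.mem_filter] at hqs
  refine ⟨q, ⟨hqs.2.1, fun r hr hrq => ?_⟩, hqs.2.2⟩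
  have hrs : r ∈ s := by
    simp only [hs, Finset.mem_filter, Finset.mem_product, Finset.mem_range]
    have := bisize_bound G hr
    exact ⟨⟨by omega, by omega⟩, hr, hqs.2.2.1.trans hrq.1, hqs.2.2.2.trans hrq.2⟩
  have := hqmax r hrs
  obtain ⟨h1, h2⟩ := hrq
  have : r.1 = q.1 ∧ r.2 = q.2 := by omega
  exact Prod.ext this.1 this.2

lemma bicliqueVS_subset (G : BipGraph V) {C : Finset V} (h : IsBicliqueVS G C) :
    C ⊆ G.B ∪ G.W := by
  obtain ⟨S, T, ⟨hSB, hTW, _⟩, rfl⟩ := h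
  exact Finset.union_subset (hSB.trans Finset.subset_union_left)
    (hTW.trans Finset.subset_union_right)

lemma exists_maximalVS (G : BipGraph V) {C0 : Finset V} (h : IsBicliqueVS G C0) :
    ∃ C, MaximalBicliqueVS G C ∧ C0 ⊆ C := by
  classical
  set fam : Finset (Finset V) :=
    (G.B ∪ G.W).powerset.filter (fun D => IsBicliqueVS G D ∧ C0 ⊆ D) with hfam
  have hC0 : C0 ∈ fam := by
    simp only [hfam, Finset.mem_filter, Finset.mem_powerset]
    exact ⟨bicliqueVS_subset G h, h, le_refl _⟩
  obtain ⟨C, hCs, hCmax⟩ := Finset.exists_max_image fam Finset.card ⟨C0, hC0⟩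
  simp only [hfam, Finset.mem_filter, Finset.mem_powerset] at hCs
  refine ⟨C, ⟨hCs.2.1, fun D hD hCD => ?_⟩, hCs.2.2⟩
  have hDs : D ∈ fam := by
    simp only [hfam, Finset.mem_filter, Finset.mem_powerset]
    exact ⟨bicliqueVS_subset G hD, hD, hCs.2.2.trans hCD⟩
  exact Finset.eq_of_subset_of_card_le hCD (hCmax D hDs)

lemma bisize_induce (G : BipGraph V) (M' : Finset V) {p : ℕ × ℕ}
    (h : Bisize (induce G M') p) : Bisize G p := by
  obtain ⟨S, T, ⟨hSB, hTW, hE⟩, hS, hT⟩ := h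
  refine ⟨S, T, ⟨?_, ?_, fun b hb w hw => (hE b hb w hw).1⟩, hS, hT⟩
  · exact hSB.trans Finset.inter_subset_left
  · exact hTW.trans Finset.inter_subset_left

lemma biclique_to_quotient (G : BipGraph V) {k : ℕ} (M : Fin k → Finset V)
    (hcover : Finset.univ.biUnion M = G.B ∪ G.W)
    {S T : Finset V} (h : IsBiclique G S T) :
    ∃ C, IsBicliqueVS (quotientGraph G M) C ∧ S ∪ T ⊆ Rroc G M C := by
  classical
  obtain ⟨hSB, hTW, hE⟩ := h
  set S' : Finset (Fin k × Bool) :=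
    Finset.univ.filter (fun p => p.2 = true ∧ (S ∩ M p.1).Nonempty) with hS'
  set T' : Finset (Fin k × Bool) :=
    Finset.univ.filter (fun p => p.2 = false ∧ (T ∩ M p.1).Nonempty) with hT'
  refine ⟨S' ∪ T', ⟨S', T', ⟨?_, ?_, ?_⟩, rfl⟩, ?_⟩
  · intro p hp
    simp only [hS', Finset.mem_filter, Finset.mem_univ, true_and] at hp
    obtain ⟨hp2, x, hx⟩ := hp
    simp only [quotientGraph, Finset.mem_filter, Finset.mem_univ, true_and]
    rw [Finset.mem_inter] at hx
    exact ⟨hp2, x, Finset.mem_inter.mpr ⟨hx.2, hSB hx.1⟩⟩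
  · intro p hp
    simp only [hT', Finset.mem_filter, Finset.mem_univ, true_and] at hp
    obtain ⟨hp2, y, hy⟩ := hp
    simp only [quotientGraph, Finset.mem_filter, Finset.mem_univ, true_and]
    rw [Finset.mem_inter] at hy
    exact ⟨hp2, y, Finset.mem_inter.mpr ⟨hy.2, hTW hy.1⟩⟩
  · intro b hb w hw
    simp only [hS', Finset.mem_filter, Finset.mem_univ, true_and] at hb
    simp only [hT', Finset.mem_filter, Finset.mem_univ, true_and] at hw
    obtain ⟨hb2, x, hx⟩ := hb
    obtain ⟨hw2, y, hy⟩ := hw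
    rw [Finset.mem_inter] at hx hy
    refine ⟨hb2, hw2, x, Finset.mem_inter.mpr ⟨hx.2, hSB hx.1⟩,
      y, Finset.mem_inter.mpr ⟨hy.2, hTW hy.1⟩, hE x hx.1 y hy.1⟩
  · intro x hx
    rw [Finset.mem_union] at hx
    rcases hx with hx | hx
    · have hxB : x ∈ G.B := hSB hx
      have : x ∈ Finset.univ.biUnion M := by
        rw [hcover]; exact Finset.mem_union_left _ hxB
      obtain ⟨i, _, hxi⟩ := Finset.mem_biUnion.mp this
      refine Finset.mem_biUnion.mpr ⟨(i, true), ?_, ?_⟩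
      · exact Finset.mem_union_left _ (by
          simp only [hS', Finset.mem_filter, Finset.mem_univ, true_and]
          exact ⟨x, Finset.mem_inter.mpr ⟨hx, hxi⟩⟩)
      · simp only [if_pos rfl]
        exact Finset.mem_inter.mpr ⟨hxi, hxB⟩
    · have hxW : x ∈ G.W := hTW hx
      have : x ∈ Finset.univ.biUnion M := by
        rw [hcover]; exact Finset.mem_union_right _ hxW
      obtain ⟨i, _, hxi⟩ := Finset.mem_biUnion.mp this
      refine Finset.mem_biUnion.mpr ⟨(i, false), ?_, ?_⟩
      · exact Finset.mem_union_right _ (by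
          simp only [hT', Finset.mem_filter, Finset.mem_univ, true_and]
          exact ⟨x, Finset.mem_inter.mpr ⟨hx, hxi⟩⟩)
      · simp only [Bool.false_eq_true, if_neg]
        exact Finset.mem_inter.mpr ⟨hxi, hxW⟩

lemma bisize_forward (G : BipGraph V) {k : ℕ} (M : Fin k → Finset V)
    (hcover : Finset.univ.biUnion M = G.B ∪ G.W) {p : ℕ × ℕ}
    (h : Bisize G p) :
    ∃ C, MaximalBicliqueVS (quotientGraph G M) C ∧
      Bisize (induce G (Rroc G M C)) p := by
  obtain ⟨S, T, hbc, hS, hT⟩ := h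
  obtain ⟨C0, hC0, hsub⟩ := biclique_to_quotient G M hcover hbc
  obtain ⟨C, hC, hC0C⟩ := exists_maximalVS _ hC0
  have hsub' : S ∪ T ⊆ Rroc G M C := by
    refine hsub.trans ?_
    intro x hx
    obtain ⟨q, hq, hxq⟩ := Finset.mem_biUnion.mp hx
    exact Finset.mem_biUnion.mpr ⟨q, hC0C hq, hxq⟩
  obtain ⟨hSB, hTW, hE⟩ := hbc
  refine ⟨C, hC, S, T, ⟨?_, ?_, ?_⟩, hS, hT⟩
  · intro s hs
    exact Finset.mem_inter.mpr ⟨hSB hs, hsub' (Finset.mem_union_left _ hs)⟩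
  · intro t ht
    exact Finset.mem_inter.mpr ⟨hTW ht, hsub' (Finset.mem_union_right _ ht)⟩
  · intro b hb w hw
    exact ⟨hE b hb w hw, hsub' (Finset.mem_union_left _ hb),
      hsub' (Finset.mem_union_right _ hw)⟩

end Aux

/-- second part of Theorem 17 of the paper. -/
theorem prime_case {V : Type} [DecidableEq V] (G : BipGraph V)
    (k : ℕ) (M : Fin k → Finset V)
    (hne : ∀ i, (M i).Nonempty)
    (hdisj : ∀ i j, i ≠ j → Disjoint (M i) (M j))
    (hcover : Finset.univ.biUnion M = G.B ∪ G.W)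
    (hbim : ∀ i, Bimodule G (M i)) :
    DD G = Dom (⋃ C ∈ {C | MaximalBicliqueVS (quotientGraph G M) C},
      DD (induce G (Rroc G M C))) := by
  classical
  set H := quotientGraph G M with hH
  set X : Set (ℕ × ℕ) := ⋃ C ∈ {C | MaximalBicliqueVS H C},
      DD (induce G (Rroc G M C)) with hX
  have hXmem : ∀ q ∈ X, Bisize G q := by
    intro q hq
    simp only [hX, Set.mem_iUnion, Set.mem_setOf_eq] at hq
    obtain ⟨C, _, hq⟩ := hq
    exact bisize_induce G _ hq.1
  ext p
  simp only [DD, Dom, Set.mem_setOf_eq]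
  constructor
  · rintro ⟨hp, hpmax⟩
    obtain ⟨C, hC, hpc⟩ := bisize_forward G M hcover hp
    obtain ⟨q, hqmax, hqdom⟩ := exists_maxbisize_dom _ hpc
    have hqG : Bisize G q := bisize_induce G _ hqmax.1
    have hqp : q = p := hpmax q hqG hqdom
    refine ⟨?_, fun r hr hrp => hpmax r (hXmem r hr) hrp⟩
    simp only [hX, Set.mem_iUnion, Set.mem_setOf_eq]
    exact ⟨C, hC, hqp ▸ hqmax⟩
  · rintro ⟨hp, hpmax⟩
    have hpG : Bisize G p := hXmem p hp
    refine ⟨hpG, fun q hq hqp => ?_⟩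
    obtain ⟨C, hC, hqc⟩ := bisize_forward G M hcover hq
    obtain ⟨r, hrmax, hrdom⟩ := exists_maxbisize_dom _ hqc
    have hrX : r ∈ X := by
      simp only [hX, Set.mem_iUnion, Set.mem_setOf_eq]
      exact ⟨C, hC, hrmax⟩
    have hrp : r = p := hpmax r hrX ⟨hqp.1.trans hrdom.1, hqp.2.trans hrdom.2⟩
    obtain ⟨h1, h2⟩ := hqp
    obtain ⟨h3, h4⟩ := hrdom
    rw [hrp] at h3 h4
    exact Prod.ext (le_antisymm h3 h1) (le_antisymm h4 h2)
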